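/- Let A, B, C each be the infinite dihedral-type presentation ⟨x₁,x₂ ∣ x₁², x₂², (x₁x₂)²⟩, i.e. each isomorphic to Z/2 × Z/2. Let φ : A * B → C be the homomorphism of the free product defined by φ(a₁)=φ(b₁)=c₁ and φ(a₂)=φ(b₂)=c₂. Then the kernel of φ is a free group of rank 3, generated by x = a₁b₁, y = a₂b₂, and z = a₁a₂b₂a₁. -/

import Mathlib

open Monoid

/-- The Klein four-group `Z/2 × Z/2`, written multiplicatively. -/
abbrev Klein : Type := Multiplicative (ZMod 2 × ZMod 2)

/-- First generator `c₁` of the Klein four-group. -/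
def c₁ : Klein := Multiplicative.ofAdd (1, 0)

/-- Second generator `c₂` of the Klein four-group. -/
def c₂ : Klein := Multiplicative.ofAdd (0, 1)

/-- The homomorphism `φ : A * B → C` (with `A = B = C = Klein`) determined by
`φ(a₁) = φ(b₁) = c₁` and `φ(a₂) = φ(b₂) = c₂`: it is the lift of the identity on
both free factors. -/
def phi : Coprod Klein Klein →* Klein :=
  Coprod.lift (MonoidHom.id Klein) (MonoidHom.id Klein)

/-- `a₁ = inl c₁`, `a₂ = inl c₂`, `b₁ = inr c₁`, `b₂ = inr c₂` in the free product. -/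
def a₁ : Coprod Klein Klein := Coprod.inl c₁
def a₂ : Coprod Klein Klein := Coprod.inl c₂
def b₁ : Coprod Klein Klein := Coprod.inr c₁
def b₂ : Coprod Klein Klein := Coprod.inr c₂

-- auxiliary
abbrev N3 : Type := FreeGroup (Fin 3)
def X0 : N3 := FreeGroup.of 0
def X1 : N3 := FreeGroup.of 1
def X2 : N3 := FreeGroup.of 2

def e1 : N3 →* N3 := FreeGroup.lift ![X0⁻¹, X2, X1]
def e2 : N3 →* N3 := FreeGroup.lift ![X2 * X0 * X1⁻¹, X1⁻¹, X2⁻¹]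

lemma e1_e1 : e1.comp e1 = MonoidHom.id N3 := by
  apply FreeGroup.ext_hom
  intro a
  fin_cases a <;> simp [e1, X0, X1, X2]

lemma e2_e2 : e2.comp e2 = MonoidHom.id N3 := by
  apply FreeGroup.ext_hom
  intro a
  fin_cases a <;> simp [e2, X0, X1, X2, mul_assoc]

lemma e1_e2_comm : e1.comp e2 = e2.comp e1 := by
  apply FreeGroup.ext_hom
  intro a
  fin_cases a <;> simp [e1, e2, X0, X1, X2, mul_assoc]

def A1 : MulAut N3 := MonoidHom.toMulEquiv e1 e1 e1_e1 e1_e1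
def A2 : MulAut N3 := MonoidHom.toMulEquiv e2 e2 e2_e2 e2_e2

@[simp] lemma A1_apply (n : N3) : A1 n = e1 n := rfl
@[simp] lemma A2_apply (n : N3) : A2 n = e2 n := rfl

lemma A1_sq : A1 * A1 = 1 := by
  ext n
  simpa using DFunLike.congr_fun e1_e1 n

lemma A2_sq : A2 * A2 = 1 := by
  ext n
  simpa using DFunLike.congr_fun e2_e2 n

lemma A1_A2_comm : A1 * A2 = A2 * A1 := by
  ext n
  simpa using DFunLike.congr_fun e1_e2_comm n

lemma pow_val_add {G : Type*} [Monoid G] (a : G) (ha : a * a = 1) (i k : ZMod 2) :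
    a ^ (i + k).val = a ^ i.val * a ^ k.val := by
  fin_cases i <;> fin_cases k <;> [(show a ^ 0 = a ^ 0 * a ^ 0; simp);
    (show a ^ 1 = a ^ 0 * a ^ 1; simp); (show a ^ 1 = a ^ 1 * a ^ 0; simp);
    (show a ^ 0 = a ^ 1 * a ^ 1; simp [ha])]

def act : Klein →* MulAut N3 where
  toFun c := A1 ^ (Multiplicative.toAdd c).1.val * A2 ^ (Multiplicative.toAdd c).2.val
  map_one' := by simp [show ((0 : ZMod 2)).val = 0 from rfl]
  map_mul' p q := by
    show A1 ^ ((Multiplicative.toAdd p).1 + (Multiplicative.toAdd q).1).val *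
        A2 ^ ((Multiplicative.toAdd p).2 + (Multiplicative.toAdd q).2).val = _
    rw [pow_val_add A1 A1_sq, pow_val_add A2 A2_sq,
      ((show Commute A1 A2 from A1_A2_comm).pow_pow _ _).mul_mul_mul_comm]

@[simp] lemma act_c₁ : act c₁ = A1 := by
  show A1 ^ (1 : ZMod 2).val * A2 ^ (0 : ZMod 2).val = A1
  norm_num [show ((1 : ZMod 2)).val = 1 from rfl, show ((0 : ZMod 2)).val = 0 from rfl]

@[simp] lemma act_c₂ : act c₂ = A2 := by
  show A1 ^ (0 : ZMod 2).val * A2 ^ (1 : ZMod 2).val = A2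
  norm_num [show ((1 : ZMod 2)).val = 1 from rfl, show ((0 : ZMod 2)).val = 0 from rfl]

lemma klein_cases (c : Klein) : c = 1 ∨ c = c₁ ∨ c = c₂ ∨ c = c₁ * c₂ := by
  rcases hc : Multiplicative.toAdd c with ⟨i, j⟩
  have : c = Multiplicative.ofAdd (i, j) := by rw [← hc]; rfl
  subst this
  fin_cases i <;> fin_cases j <;> [exact Or.inl rfl; exact Or.inr (Or.inr (Or.inl rfl));
    exact Or.inr (Or.inl rfl); exact Or.inr (Or.inr (Or.inr rfl))]

lemma klein_hom_ext {M : Type*} [Monoid M] {f g : Klein →* M}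
    (h1 : f c₁ = g c₁) (h2 : f c₂ = g c₂) : f = g := by
  refine MonoidHom.ext fun c => ?_
  rcases klein_cases c with rfl | rfl | rfl | rfl <;> simp [h1, h2]

section Words

lemma inl_c₁_eq : (Coprod.inl c₁ : Coprod Klein Klein) = a₁ := rfl
lemma inl_c₂_eq : (Coprod.inl c₂ : Coprod Klein Klein) = a₂ := rfl
lemma inr_c₁_eq : (Coprod.inr c₁ : Coprod Klein Klein) = b₁ := rfl
lemma inr_c₂_eq : (Coprod.inr c₂ : Coprod Klein Klein) = b₂ := rfl

@[simp] lemma a₁_sq : a₁ * a₁ = 1 := by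
  rw [a₁, ← map_mul, show c₁ * c₁ = 1 by decide, map_one]
@[simp] lemma a₂_sq : a₂ * a₂ = 1 := by
  rw [a₂, ← map_mul, show c₂ * c₂ = 1 by decide, map_one]
@[simp] lemma b₁_sq : b₁ * b₁ = 1 := by
  rw [b₁, ← map_mul, show c₁ * c₁ = 1 by decide, map_one]
@[simp] lemma b₂_sq : b₂ * b₂ = 1 := by
  rw [b₂, ← map_mul, show c₂ * c₂ = 1 by decide, map_one]

@[simp] lemma a₁_sq' (w : Coprod Klein Klein) : a₁ * (a₁ * w) = w := by
  rw [← mul_assoc, a₁_sq, one_mul]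
@[simp] lemma a₂_sq' (w : Coprod Klein Klein) : a₂ * (a₂ * w) = w := by
  rw [← mul_assoc, a₂_sq, one_mul]
@[simp] lemma b₁_sq' (w : Coprod Klein Klein) : b₁ * (b₁ * w) = w := by
  rw [← mul_assoc, b₁_sq, one_mul]
@[simp] lemma b₂_sq' (w : Coprod Klein Klein) : b₂ * (b₂ * w) = w := by
  rw [← mul_assoc, b₂_sq, one_mul]

@[simp] lemma a₁_inv : a₁⁻¹ = a₁ := by
  rw [a₁, ← map_inv, show c₁⁻¹ = c₁ by decide]
@[simp] lemma a₂_inv : a₂⁻¹ = a₂ := by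
  rw [a₂, ← map_inv, show c₂⁻¹ = c₂ by decide]
@[simp] lemma b₁_inv : b₁⁻¹ = b₁ := by
  rw [b₁, ← map_inv, show c₁⁻¹ = c₁ by decide]
@[simp] lemma b₂_inv : b₂⁻¹ = b₂ := by
  rw [b₂, ← map_inv, show c₂⁻¹ = c₂ by decide]

@[simp] lemma a_comm : a₂ * a₁ = a₁ * a₂ := by
  rw [a₁, a₂, ← map_mul, ← map_mul, show c₂ * c₁ = c₁ * c₂ by decide]
@[simp] lemma b_comm : b₂ * b₁ = b₁ * b₂ := by
  rw [b₁, b₂, ← map_mul, ← map_mul, show c₂ * c₁ = c₁ * c₂ by decide]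
@[simp] lemma a_comm' (w : Coprod Klein Klein) : a₂ * (a₁ * w) = a₁ * (a₂ * w) := by
  rw [← mul_assoc, a_comm, mul_assoc]
@[simp] lemma b_comm' (w : Coprod Klein Klein) : b₂ * (b₁ * w) = b₁ * (b₂ * w) := by
  rw [← mul_assoc, b_comm, mul_assoc]

end Words

def psi : N3 →* Coprod Klein Klein :=
  FreeGroup.lift (![a₁ * b₁, a₂ * b₂, a₁ * a₂ * b₂ * a₁] : Fin 3 → Coprod Klein Klein)

lemma psi_compat : ∀ c : Klein,
    psi.comp (act c).toMonoidHom = (MulAut.conj (Coprod.inl c)).toMonoidHom.comp psi := by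
  intro c
  rcases klein_cases c with rfl | rfl | rfl | rfl <;>
    apply FreeGroup.ext_hom <;> intro a <;> fin_cases a <;>
      simp [psi, e1, e2, X0, X1, X2, mul_assoc, inl_c₁_eq, inl_c₂_eq, inr_c₁_eq, inr_c₂_eq]

abbrev G3 : Type := SemidirectProduct N3 Klein act

def Psi : G3 →* Coprod Klein Klein :=
  SemidirectProduct.lift psi (Coprod.inl) psi_compat

def B1 : G3 := ⟨X0⁻¹, c₁⟩
def B2 : G3 := ⟨X1⁻¹, c₂⟩

lemma act_c₁_X0 : act c₁ X0 = X0⁻¹ := by simp [e1, X0]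
lemma act_c₂_X1 : act c₂ X1 = X1⁻¹ := by simp [e2, X1]

lemma B1_sq : B1 * B1 = 1 := by
  apply SemidirectProduct.ext <;>
    simp [B1, SemidirectProduct.mul_left, SemidirectProduct.mul_right, e1, X0,
      show c₁ * c₁ = 1 by decide]

lemma B2_sq : B2 * B2 = 1 := by
  apply SemidirectProduct.ext <;>
    simp [B2, SemidirectProduct.mul_left, SemidirectProduct.mul_right, e2, X1,
      show c₂ * c₂ = 1 by decide]

lemma B1_B2_comm : B1 * B2 = B2 * B1 := by
  apply SemidirectProduct.ext <;>
    simp [B1, B2, SemidirectProduct.mul_left, SemidirectProduct.mul_right,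
      e1, e2, X0, X1, X2, mul_assoc, show c₁ * c₂ = c₂ * c₁ by decide]

def thetaB : Klein →* G3 where
  toFun c := B1 ^ (Multiplicative.toAdd c).1.val * B2 ^ (Multiplicative.toAdd c).2.val
  map_one' := by simp [show ((0 : ZMod 2)).val = 0 from rfl]
  map_mul' p q := by
    show B1 ^ ((Multiplicative.toAdd p).1 + (Multiplicative.toAdd q).1).val *
        B2 ^ ((Multiplicative.toAdd p).2 + (Multiplicative.toAdd q).2).val = _
    rw [pow_val_add B1 B1_sq, pow_val_add B2 B2_sq,
      ((show Commute B1 B2 from B1_B2_comm).pow_pow _ _).mul_mul_mul_comm]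

@[simp] lemma thetaB_c₁ : thetaB c₁ = B1 := by
  show B1 ^ (1 : ZMod 2).val * B2 ^ (0 : ZMod 2).val = B1
  norm_num [show ((1 : ZMod 2)).val = 1 from rfl, show ((0 : ZMod 2)).val = 0 from rfl]

@[simp] lemma thetaB_c₂ : thetaB c₂ = B2 := by
  show B1 ^ (0 : ZMod 2).val * B2 ^ (1 : ZMod 2).val = B2
  norm_num [show ((1 : ZMod 2)).val = 1 from rfl, show ((0 : ZMod 2)).val = 0 from rfl]

def theta : Coprod Klein Klein →* G3 :=
  Coprod.lift SemidirectProduct.inr thetaB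

@[simp] lemma theta_a₁ : theta a₁ = SemidirectProduct.inr c₁ := rfl
@[simp] lemma theta_a₂ : theta a₂ = SemidirectProduct.inr c₂ := rfl
@[simp] lemma theta_b₁ : theta b₁ = B1 := by
  rw [b₁, theta, Coprod.lift_apply_inr, thetaB_c₁]
@[simp] lemma theta_b₂ : theta b₂ = B2 := by
  rw [b₂, theta, Coprod.lift_apply_inr, thetaB_c₂]

lemma Psi_theta : Psi.comp theta = MonoidHom.id (Coprod Klein Klein) := by
  apply Coprod.hom_ext
  · ext c
    simp [theta, Psi]
  · have h1 : (Psi.comp theta).comp Coprod.inr = (MonoidHom.id (Coprod Klein Klein)).comp Coprod.inr := by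
      apply klein_hom_ext <;>
        simp [Psi, B1, B2, psi, X0, X1, inr_c₁_eq, inr_c₂_eq, inl_c₁_eq, inl_c₂_eq, mul_assoc]
    exact h1

lemma theta_Psi : theta.comp Psi = MonoidHom.id G3 := by
  apply SemidirectProduct.hom_ext
  · apply FreeGroup.ext_hom
    intro a
    fin_cases a <;>
      (apply SemidirectProduct.ext <;>
        simp [psi, Psi, SemidirectProduct.mul_left, SemidirectProduct.mul_right,
          B1, B2, e1, e2, X0, X1, X2, mul_assoc] <;> decide)
  · apply klein_hom_ext <;> simp [Psi, theta]

lemma phi_psi : phi.comp psi = 1 := by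
  apply FreeGroup.ext_hom
  intro a
  fin_cases a <;> simp [phi, psi, a₁, a₂, b₁, b₂] <;> decide

lemma rightHom_theta : SemidirectProduct.rightHom.comp theta = phi := by
  apply Coprod.hom_ext
  · refine MonoidHom.ext fun c => ?_
    simp [theta, phi]
  · apply klein_hom_ext <;> simp [theta, phi, B1, B2, b₁, b₂] <;> decide

lemma theta_Psi_apply (w : G3) : theta (Psi w) = w := by
  simpa using DFunLike.congr_fun theta_Psi w

lemma Psi_theta_apply (g : Coprod Klein Klein) : Psi (theta g) = g := by
  simpa using DFunLike.congr_fun Psi_theta g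

/-- The kernel of `φ : A * B → C` is a free group of rank 3, with basis
`x = a₁b₁`, `y = a₂b₂`, `z = a₁a₂b₂a₁`: the homomorphism from the free group on
three generators sending them to `x, y, z` is injective and has range exactly `ker φ`. -/
theorem kernel_phi_free_of_rank_three :
    Function.Injective
      (FreeGroup.lift (![a₁ * b₁, a₂ * b₂, a₁ * a₂ * b₂ * a₁] : Fin 3 → Coprod Klein Klein)) ∧
    (FreeGroup.lift (![a₁ * b₁, a₂ * b₂, a₁ * a₂ * b₂ * a₁] : Fin 3 → Coprod Klein Klein)).range
      = phi.ker := by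

  have hPsi_inl : ∀ n : N3, Psi (SemidirectProduct.inl n) = psi n := fun n => by
    simp [Psi]
  constructor
  · intro u v huv
    have h1 : Psi (SemidirectProduct.inl u) = Psi (SemidirectProduct.inl v) := by
      rw [hPsi_inl, hPsi_inl]; exact huv
    have h2 : (SemidirectProduct.inl u : G3) = SemidirectProduct.inl v := by
      rw [← theta_Psi_apply (SemidirectProduct.inl u), h1, theta_Psi_apply]
    exact SemidirectProduct.inl_injective h2
  · ext g
    constructor
    · rintro ⟨n, rfl⟩
      have := DFunLike.congr_fun phi_psi n
      simpa [MonoidHom.mem_ker, psi] using this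
    · intro hg
      rw [MonoidHom.mem_ker] at hg
      have hr : SemidirectProduct.rightHom (theta g) = 1 := by
        have := DFunLike.congr_fun rightHom_theta g
        simp only [MonoidHom.comp_apply] at this
        rw [this, hg]
      have : theta g ∈ (SemidirectProduct.inl : N3 →* G3).range := by
        rw [SemidirectProduct.range_inl_eq_ker_rightHom, MonoidHom.mem_ker]
        exact hr
      obtain ⟨n, hn⟩ := this
      exact ⟨n, by rw [show (FreeGroup.lift (![a₁ * b₁, a₂ * b₂, a₁ * a₂ * b₂ * a₁] :
        Fin 3 → Coprod Klein Klein)) n = psi n from rfl, ← hPsi_inl, hn, Psi_theta_apply]⟩
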